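/- Let w be a 2D word over an alphabet Σ. Every 2D palindromic factor of w is an HV-palindrome if and only if w has no factor z of size (r,s) with r ≥ 2 and s ≥ 2 satisfying all of the following: z_{1,1} ≠ z_{1,s}; the last row of z is the reverse of the first row of z (z_{r,j} = z_{1,s+1−j} for all j); the last column of z is the reverse of the first column of z (z_{i,s} = z_{r+1−i,1} for all i); and the interior block [z_{i,j}]_{2 ≤ i ≤ r−1, 2 ≤ j ≤ s−1} is a 2D palindrome (this interior condition is vacuous when r = 2 or s = 2). -/

import Mathlib

/-- A 2D word `w` is a 2D palindrome if it equals its reverse. -/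
def IsPal2D {A : Type*} {m n : ℕ} (w : Fin m → Fin n → A) : Prop :=
  ∀ i j, w i j = w i.rev j.rev

/-- A 2D word is an HV-palindrome if every row and every column is a palindrome. -/
def IsHVPal {A : Type*} {m n : ℕ} (w : Fin m → Fin n → A) : Prop :=
  (∀ i j, w i j = w i j.rev) ∧ (∀ i j, w i j = w i.rev j)

/-- `p` is a factor (sub-array) of `w`. -/
def IsFactor {A : Type*} {k l m n : ℕ} (p : Fin k → Fin l → A)
    (w : Fin m → Fin n → A) : Prop :=
  ∃ r c, ∃ (h1 : r + k ≤ m) (h2 : c + l ≤ n),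
    ∀ (i : Fin k) (j : Fin l),
      p i j = w ⟨r + i, by have := i.isLt; omega⟩ ⟨c + j, by have := j.isLt; omega⟩

theorem congr2' {A : Type*} {m n : ℕ} (f : Fin m → Fin n → A) {x x' : Fin m} {y y' : Fin n}
    (hx : (x:ℕ) = x') (hy : (y:ℕ) = y') : f x y = f x' y' := by
  obtain rfl : x = x' := Fin.ext hx
  obtain rfl : y = y' := Fin.ext hy
  rfl

theorem key' {A : Type*} {k l m n : ℕ} (p : Fin k → Fin l → A) (w : Fin m → Fin n → A)
    (hfac : IsFactor p w) (hpal : IsPal2D p) (a : Fin k) (b : Fin l)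
    (ha : 2 * (a:ℕ) + 2 ≤ k) (hb : 2 * (b:ℕ) + 2 ≤ l)
    (hne : p a b ≠ p a b.rev) :
    ∃ (r s : ℕ) (hr : 1 < r) (hs : 1 < s) (z : Fin r → Fin s → A),
        IsFactor z w ∧
        z ⟨0, by omega⟩ ⟨0, by omega⟩ ≠ z ⟨0, by omega⟩ ⟨s - 1, by omega⟩ ∧
        (∀ j : Fin s, z ⟨r - 1, by omega⟩ j = z ⟨0, by omega⟩ j.rev) ∧
        (∀ i : Fin r, z i ⟨s - 1, by omega⟩ = z i.rev ⟨0, by omega⟩) ∧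
        (∀ (i : Fin r) (j : Fin s),
          0 < (i : ℕ) → (i : ℕ) < r - 1 → 0 < (j : ℕ) → (j : ℕ) < s - 1 →
          z i j = z i.rev j.rev) := by
  have zpal : ∀ (i : Fin (k - 2*(a:ℕ))) (j : Fin (l - 2*(b:ℕ))),
      p ⟨(a:ℕ) + i, by have := i.isLt; omega⟩ ⟨(b:ℕ) + j, by have := j.isLt; omega⟩
      = p ⟨(a:ℕ) + i.rev, by have := i.rev.isLt; omega⟩
          ⟨(b:ℕ) + j.rev, by have := j.rev.isLt; omega⟩ := by
    intro i j
    rw [hpal]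
    exact congr2' p
      (by simp only [Fin.val_rev]; have := i.isLt; omega)
      (by simp only [Fin.val_rev]; have := j.isLt; omega)
  refine ⟨k - 2*(a:ℕ), l - 2*(b:ℕ), by omega, by omega,
    fun i j => p ⟨(a:ℕ) + i, by have := i.isLt; omega⟩ ⟨(b:ℕ) + j, by have := j.isLt; omega⟩,
    ?_, ?_, ?_, ?_, ?_⟩
  · obtain ⟨r0, c0, h1, h2, hw⟩ := hfac
    refine ⟨r0 + a, c0 + b, by omega, by omega, fun i j => ?_⟩
    simp only []
    rw [hw]
    exact congr2' w (by simp; omega) (by simp; omega)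
  · intro h
    simp only [] at h
    apply hne
    calc p a b = p ⟨(a:ℕ) + (0:ℕ), by omega⟩ ⟨(b:ℕ) + (0:ℕ), by omega⟩ :=
          congr2' p (by simp) (by simp)
      _ = p ⟨(a:ℕ) + (0:ℕ), by omega⟩ ⟨(b:ℕ) + (l - 2*(b:ℕ) - 1), by omega⟩ := h
      _ = p a b.rev := congr2' p (by simp) (by simp only [Fin.val_rev]; omega)
  · intro j
    simp only []
    exact (zpal ⟨k - 2*(a:ℕ) - 1, by omega⟩ j).trans
      (congr2' p (by simp only [Fin.val_rev]; omega) rfl)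
  · intro i
    simp only []
    exact (zpal i ⟨l - 2*(b:ℕ) - 1, by omega⟩).trans
      (congr2' p rfl (by simp only [Fin.val_rev]; omega))
  · intro i j _ _ _ _
    exact zpal i j
theorem mrow' {A : Type*} {k l m n : ℕ} (p : Fin k → Fin l → A) (w : Fin m → Fin n → A)
    (hfac : IsFactor p w) (hpal : IsPal2D p) (a : Fin k) (b : Fin l)
    (hne : p a b ≠ p a b.rev) :
    ∃ (r s : ℕ) (hr : 1 < r) (hs : 1 < s) (z : Fin r → Fin s → A),
        IsFactor z w ∧
        z ⟨0, by omega⟩ ⟨0, by omega⟩ ≠ z ⟨0, by omega⟩ ⟨s - 1, by omega⟩ ∧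
        (∀ j : Fin s, z ⟨r - 1, by omega⟩ j = z ⟨0, by omega⟩ j.rev) ∧
        (∀ i : Fin r, z i ⟨s - 1, by omega⟩ = z i.rev ⟨0, by omega⟩) ∧
        (∀ (i : Fin r) (j : Fin s),
          0 < (i : ℕ) → (i : ℕ) < r - 1 → 0 < (j : ℕ) → (j : ℕ) < s - 1 →
          z i j = z i.rev j.rev) := by
  -- normalize b
  obtain ⟨b', hb', hne'⟩ : ∃ b' : Fin l, 2 * (b':ℕ) + 2 ≤ l ∧ p a b' ≠ p a b'.rev := by
    have hbl := b.isLt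
    rcases Nat.lt_trichotomy (b:ℕ) (l - 1 - b) with h | h | h
    · exact ⟨b, by omega, hne⟩
    · exact absurd (congr2' p rfl (by simp only [Fin.val_rev]; try omega) :
        p a b = p a b.rev) hne
    · refine ⟨b.rev, by simp only [Fin.val_rev]; try omega, fun hc => hne ?_⟩
      rw [Fin.rev_rev] at hc
      exact hc.symm
  clear hne
  -- normalize a
  obtain ⟨a', ha', hne''⟩ : ∃ a' : Fin k, 2 * (a':ℕ) + 2 ≤ k ∧ p a' b' ≠ p a' b'.rev := by
    have hak := a.isLt
    rcases Nat.lt_trichotomy (a:ℕ) (k - 1 - a) with h | h | h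
    · exact ⟨a, by omega, hne'⟩
    · refine absurd ?_ hne'
      calc p a b' = p a.rev b'.rev := hpal a b'
        _ = p a b'.rev := congr2' p (by simp only [Fin.val_rev]; try omega) rfl
    · refine ⟨a.rev, by simp only [Fin.val_rev]; try omega, fun hc => hne' ?_⟩
      calc p a b' = p a.rev b'.rev := hpal a b'
        _ = p a.rev b' := hc.symm
        _ = p a.rev.rev b'.rev := hpal a.rev b'
        _ = p a b'.rev := by rw [Fin.rev_rev]
  exact key' p w hfac hpal a' b' ha' hb' hne''

/-- every 2D palindromic factor of `w` is an HV-palindrome iff `w` has no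
factor `z` of size `(r,s)`, `r,s ≥ 2`, with `z_{1,1} ≠ z_{1,s}`, last row the reverse of
the first row, last column the reverse of the first column, and palindromic interior. -/
theorem stmt_5 {A : Type*} (m n : ℕ) (w : Fin m → Fin n → A) :
    (∀ (k l : ℕ) (p : Fin k → Fin l → A), IsFactor p w → IsPal2D p → IsHVPal p) ↔
    ¬ ∃ (r s : ℕ) (hr : 2 ≤ r) (hs : 2 ≤ s) (z : Fin r → Fin s → A),
        IsFactor z w ∧
        z ⟨0, by omega⟩ ⟨0, by omega⟩ ≠ z ⟨0, by omega⟩ ⟨s - 1, by omega⟩ ∧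
        (∀ j : Fin s, z ⟨r - 1, by omega⟩ j = z ⟨0, by omega⟩ j.rev) ∧
        (∀ i : Fin r, z i ⟨s - 1, by omega⟩ = z i.rev ⟨0, by omega⟩) ∧
        (∀ (i : Fin r) (j : Fin s),
          0 < (i : ℕ) → (i : ℕ) < r - 1 → 0 < (j : ℕ) → (j : ℕ) < s - 1 →
          z i j = z i.rev j.rev) := by
  constructor
  · rintro H ⟨r, s, hr, hs, z, hfac, hne, hrow, hcol, hint⟩
    have zpal : IsPal2D z := by
      intro i j
      have hir := i.isLt
      have hjs := j.isLt
      by_cases hi0 : (i:ℕ) = 0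
      · calc z i j = z ⟨0, by omega⟩ j.rev.rev := congr2' z hi0 (by rw [Fin.rev_rev])
          _ = z ⟨r - 1, by omega⟩ j.rev := (hrow j.rev).symm
          _ = z i.rev j.rev := congr2' z (by simp only [Fin.val_rev]; try omega) rfl
      · by_cases hi1 : (i:ℕ) = r - 1
        · calc z i j = z ⟨r - 1, by omega⟩ j := congr2' z hi1 rfl
            _ = z ⟨0, by omega⟩ j.rev := hrow j
            _ = z i.rev j.rev := congr2' z (by simp only [Fin.val_rev]; try omega) rfl
        · by_cases hj0 : (j:ℕ) = 0
          · calc z i j = z i.rev.rev ⟨0, by omega⟩ := congr2' z (by rw [Fin.rev_rev]) hj0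
              _ = z i.rev ⟨s - 1, by omega⟩ := (hcol i.rev).symm
              _ = z i.rev j.rev := congr2' z rfl (by simp only [Fin.val_rev]; try omega)
          · by_cases hj1 : (j:ℕ) = s - 1
            · calc z i j = z i ⟨s - 1, by omega⟩ := congr2' z rfl hj1
                _ = z i.rev ⟨0, by omega⟩ := hcol i
                _ = z i.rev j.rev := congr2' z rfl (by simp only [Fin.val_rev]; try omega)
            · exact hint i j (by omega) (by omega) (by omega) (by omega)
    have hv := H r s z hfac zpal
    apply hne
    calc z ⟨0, by omega⟩ ⟨0, by omega⟩
        = z ⟨0, by omega⟩ (⟨0, by omega⟩ : Fin s).rev := hv.1 _ _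
      _ = z ⟨0, by omega⟩ ⟨s - 1, by omega⟩ := congr2' z rfl (by simp only [Fin.val_rev]; try omega)
  · intro H k l p hfac hpal
    constructor
    · intro i j
      by_contra hne
      exact H (mrow' p w hfac hpal i j hne)
    · intro i j
      by_contra hne
      refine H (mrow' p w hfac hpal i.rev j ?_)
      intro hc
      exact hne ((hpal i j).trans hc.symm)
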